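/- Let u and v be Lyndon words with u = u₁u₂ for nonempty words u₁, u₂, and suppose u₂ < v in lexicographic order. Then uv < u₁v. -/
import Mathlib


/-- A nonempty word `u` over a totally ordered alphabet is a Lyndon word if for every
factorization `u = u₁ ++ u₂` into nonempty words one has `u < u₂` lexicographically. -/
def IsLyndon {α : Type*} [LinearOrder α] (u : List α) : Prop :=
  u ≠ [] ∧ ∀ u₁ u₂ : List α, u₁ ≠ [] → u₂ ≠ [] → u = u₁ ++ u₂ → u < u₂

private lemma lex_aux {α : Type*} {r : α → α → Prop} :
    ∀ {x y : List α}, List.Lex r x y →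
      (∃ w, y = x ++ w ∧ w ≠ []) ∨ ∀ z, List.Lex r (x ++ z) y := by
  intro x y h
  induction h with
  | nil => exact Or.inl ⟨_, rfl, by simp⟩
  | @cons a s₁ s₂ _ ih =>
      rcases ih with ⟨w, rfl, hw⟩ | ih
      · exact Or.inl ⟨w, rfl, hw⟩
      · exact Or.inr fun z => List.Lex.cons (ih z)
  | rel hab => exact Or.inr fun z => List.Lex.rel hab

/-- If `u` and `v` are Lyndon words, `u = u₁u₂` with `u₁, u₂` nonempty and `u₂ < v`, then
`uv < u₁v`. -/
theorem concat_lt_of_suffix_lt {α : Type*} [LinearOrder α] (u v u₁ u₂ : List α)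
    (hu : IsLyndon u) (hv : IsLyndon v) (h : u = u₁ ++ u₂)
    (h1 : u₁ ≠ []) (h2 : u₂ ≠ []) (hlt : u₂ < v) :
    u ++ v < u₁ ++ v := by
  subst h
  rw [List.append_assoc]
  have hlt' : List.Lex (· < ·) u₂ v := hlt
  show List.Lex (· < ·) _ _
  refine List.Lex.append_left _ ?_ u₁
  rcases lex_aux hlt' with ⟨w, rfl, hw⟩ | hall
  · have hvw : List.Lex (· < ·) (u₂ ++ w) w := hv.2 u₂ w h2 hw rfl
    exact List.Lex.append_left _ hvw u₂
  · exact hall _
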